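/- Let Γ and Λ be countable groups, (X, μ) a finite measure space with 0 < μ(X) < ∞ and a measure-preserving Γ-action (γ, x) ↦ γ·x, and α : Γ × X → Λ a measurable cocycle (α(γ₁γ₂, x) = α(γ₁, γ₂·x) α(γ₂, x) for μ-a.e. x). Let V be a complex Hilbert space and π a unitary representation of Λ on V which contains almost invariant vectors: there is a sequence of unit vectors v_n ∈ V with ‖π(λ)v_n − v_n‖ → 0 for every λ ∈ Λ. Then the induced Γ-representation on L²(X, V) contains almost invariant vectors: there exists a sequence of measurable functions f_n : X → V with ∫_X ‖f_n(x)‖² dμ(x) = 1 such that for every γ ∈ Γ, ∫_X ‖π(α(γ⁻¹, x)⁻¹)(f_n(γ⁻¹·x)) − f_n(x)‖² dμ(x) → 0 as n → ∞. -/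

import Mathlib

open MeasureTheory Filter Topology

/-- Lemma 8.1.  Let `Γ`, `Λ` be countable groups, `(X, μ)` a finite
measure space with `0 < μ(X) < ∞` and a measure-preserving `Γ`-action `a`, and
`α : Γ × X → Λ` a measurable cocycle.  If a unitary representation `π` of `Λ` on a complex
Hilbert space `V` contains almost invariant vectors, then the induced `Γ`-representation on
`L²(X, V)` contains almost invariant vectors. -/
theorem induced_has_almost_invariant_vectors {Γ Λ X V : Type}
    [Group Γ] [Countable Γ] [Group Λ] [Countable Λ]
    [MeasurableSpace X] (μ : Measure X)
    (hpos : 0 < μ Set.univ) (hfin : μ Set.univ < ⊤)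
    (a : Γ → X → X)
    (a_one : ∀ x, a 1 x = x) (a_mul : ∀ γ₁ γ₂ x, a (γ₁ * γ₂) x = a γ₁ (a γ₂ x))
    (ha : ∀ γ, MeasurePreserving (a γ) μ μ)
    (α : Γ → X → Λ)
    (hαmeas : ∀ (γ : Γ) (lam : Λ), MeasurableSet {x | α γ x = lam})
    (hcoc : ∀ γ₁ γ₂ : Γ, ∀ᵐ x ∂μ, α (γ₁ * γ₂) x = α γ₁ (a γ₂ x) * α γ₂ x)
    [NormedAddCommGroup V] [InnerProductSpace ℂ V] [CompleteSpace V]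
    [MeasurableSpace V] [BorelSpace V]
    (π : Λ →* (V ≃ₗᵢ[ℂ] V))
    (hAI : ∃ v : ℕ → V, (∀ n, ‖v n‖ = 1) ∧
      ∀ lam : Λ, Tendsto (fun n => ‖(π lam) (v n) - v n‖) atTop (nhds 0)) :
    ∃ f : ℕ → X → V, (∀ n, Measurable (f n)) ∧
      (∀ n, ∫ x, ‖f n x‖ ^ 2 ∂μ = 1) ∧
      ∀ γ : Γ, Tendsto
        (fun n => ∫ x, ‖(π ((α γ⁻¹ x)⁻¹)) (f n (a γ⁻¹ x)) - f n x‖ ^ 2 ∂μ)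
        atTop (nhds 0) := by
  obtain ⟨v, hv1, hvlim⟩ := hAI
  set m : ℝ := (μ Set.univ).toReal with hm
  have hmpos : 0 < m := ENNReal.toReal_pos hpos.ne' hfin.ne
  set c : ℝ := (Real.sqrt m)⁻¹ with hc
  have hcpos : 0 < c := inv_pos.mpr (Real.sqrt_pos.mpr hmpos)
  have hcsq : c ^ 2 = m⁻¹ := by
    rw [hc, inv_pow, Real.sq_sqrt hmpos.le]
  refine ⟨fun n _ => (c : ℂ) • v n, fun n => measurable_const, ?_, ?_⟩
  · intro n
    have hn : ‖(c : ℂ) • v n‖ ^ 2 = c ^ 2 := by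
      rw [norm_smul, Complex.norm_real, Real.norm_of_nonneg hcpos.le, hv1 n, mul_one]
    rw [integral_const, smul_eq_mul, hn, hcsq, measureReal_def, ← hm, mul_inv_cancel₀ hmpos.ne']
  · intro γ
    haveI : IsFiniteMeasure μ := ⟨hfin⟩
    letI : MeasurableSpace Λ := ⊤
    have hαm : Measurable (α γ⁻¹) := by
      intro s _
      have : α γ⁻¹ ⁻¹' s = ⋃ lam ∈ s, {x | α γ⁻¹ x = lam} := by
        ext x; simp [Set.mem_iUnion]
      rw [this]
      exact MeasurableSet.biUnion s.to_countable (fun lam _ => hαmeas γ⁻¹ lam)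
    have key : ∀ n x, ‖(π ((α γ⁻¹ x)⁻¹)) ((c : ℂ) • v n) - (c : ℂ) • v n‖ ^ 2
        = c ^ 2 * ‖(π ((α γ⁻¹ x)⁻¹)) (v n) - v n‖ ^ 2 := by
      intro n x
      rw [_root_.map_smul, ← smul_sub, norm_smul, Complex.norm_real,
        Real.norm_of_nonneg hcpos.le, mul_pow]
    have h0 : (0 : ℝ) = ∫ _ : X, (0 : ℝ) ∂μ := by simp
    simp only [key]
    rw [h0]
    apply tendsto_integral_of_dominated_convergence (fun _ => c ^ 2 * 4)
    · intro n
      have : Measurable fun x => c ^ 2 * ‖(π ((α γ⁻¹ x)⁻¹)) (v n) - v n‖ ^ 2 :=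
        (measurable_from_top (f := fun lam : Λ =>
          c ^ 2 * ‖(π lam⁻¹) (v n) - v n‖ ^ 2)).comp hαm
      exact this.aestronglyMeasurable
    · exact integrable_const _
    · intro n
      filter_upwards with x
      have hle : ‖(π ((α γ⁻¹ x)⁻¹)) (v n) - v n‖ ≤ 2 := by
        calc ‖(π ((α γ⁻¹ x)⁻¹)) (v n) - v n‖
            ≤ ‖(π ((α γ⁻¹ x)⁻¹)) (v n)‖ + ‖v n‖ := norm_sub_le _ _
          _ = 2 := by rw [LinearIsometryEquiv.norm_map, hv1 n]; norm_num
      have h1 : ‖(π ((α γ⁻¹ x)⁻¹)) (v n) - v n‖ ^ 2 ≤ 4 := by nlinarith [norm_nonneg ((π ((α γ⁻¹ x)⁻¹)) (v n) - v n)]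
      have h2 : (0:ℝ) ≤ c ^ 2 * ‖(π ((α γ⁻¹ x)⁻¹)) (v n) - v n‖ ^ 2 := by positivity
      rw [Real.norm_of_nonneg h2]
      nlinarith [sq_nonneg c]
    · filter_upwards with x
      have := (hvlim ((α γ⁻¹ x)⁻¹)).pow 2
      have h := this.const_mul (c ^ 2)
      simpa using h
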